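/- arXiv:2305.07200 — 5 statements merged into one kernel-verified Lean document; each statement's English description precedes it below -/
import Mathlib

section
/- Let (G, <) be an ordered group and a, b, g, h ∈ G. If ¬(g ∼ h), a ≪ g and b ≪ h, then a·b ≪ g·h. -/
/-- The absolute value `|g| = max(g, g⁻¹)` in a linearly ordered group. -/
def gabs {G : Type*} [Group G] [LinearOrder G] (g : G) : G := max g g⁻¹

/-- `g` and `h` are Archimedean equivalent: `|g| < |h|^m` and `|h| < |g|^n`
for some positive integers `m, n`. -/
def ArchEquiv {G : Type*} [Group G] [LinearOrder G] (g h : G) : Prop :=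
  ∃ m n : ℕ, 0 < m ∧ 0 < n ∧ gabs g < gabs h ^ m ∧ gabs h < gabs g ^ n

/-- `g` is Archimedean less than `h`: `|g|^n < |h|` for every positive integer `n`. -/
def ArchLT {G : Type*} [Group G] [LinearOrder G] (g h : G) : Prop :=
  ∀ n : ℕ, 0 < n → gabs g ^ n < gabs h

section Aux

variable {G : Type*} [Group G] [LinearOrder G]
  [CovariantClass G G (· * ·) (· < ·)]
  [CovariantClass G G (Function.swap (· * ·)) (· < ·)]

theorem gabs_aux_one_le (x : G) : 1 ≤ gabs x := by
  haveI : CovariantClass G G (· * ·) (· ≤ ·) := covariantClass_le_of_lt _ _ _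
  rcases le_total 1 x with h | h
  · exact h.trans (le_max_left _ _)
  · exact (Left.one_le_inv_iff.2 h).trans (le_max_right _ _)

theorem gabs_self_le (x : G) : x ≤ gabs x := le_max_left _ _

theorem gabs_inv_le (x : G) : x⁻¹ ≤ gabs x := le_max_right _ _

/-- Key auxiliary estimate: if `A` is dominated by `X`, `B` by `Y`, and all powers of
`Y` are at most `X`, then `Y * (max A B)^(2n) * Y < X`. -/
theorem gabs_key {A B X Y : G}
    (hA : ∀ n : ℕ, 0 < n → A ^ n < X)
    (hB : ∀ n : ℕ, 0 < n → B ^ n < Y)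
    (hYX : ∀ n : ℕ, 0 < n → Y ^ n ≤ X)
    (n : ℕ) (hn : 0 < n) : Y * max A B ^ (2 * n) * Y < X := by
  haveI : CovariantClass G G (· * ·) (· ≤ ·) := covariantClass_le_of_lt _ _ _
  haveI : CovariantClass G G (Function.swap (· * ·)) (· ≤ ·) := covariantClass_le_of_lt _ _ _
  set c := max A B with hc
  have h2n : 0 < 2 * n := by omega
  rcases lt_or_ge c Y with hcY | hYc
  · -- c < Y : bound by Y ^ (2n+2) ≤ X
    have h1 : c ^ (2 * n) < Y ^ (2 * n) := pow_lt_pow_left' (by omega) hcY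
    have h2 : Y * c ^ (2 * n) * Y < Y * Y ^ (2 * n) * Y :=
      mul_lt_mul_left (mul_lt_mul_right h1 Y) Y
    have h3 : Y * Y ^ (2 * n) * Y = Y ^ (2 * n + 2) := by
      rw [← pow_succ' Y (2 * n), ← pow_succ]
    calc Y * c ^ (2 * n) * Y < Y ^ (2 * n + 2) := h3 ▸ h2
      _ ≤ X := hYX _ (by omega)
  · -- Y ≤ c : then c = A, bound by c ^ (2n+2) = A ^ (2n+2) < X
    have hcA : c = A := by
      rcases max_choice A B with h | h
      · exact h
      · exfalso; exact absurd (hB 1 one_pos) (by rw [pow_one]; exact not_lt.2 (hYc.trans_eq h))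
    have h1 : Y * c ^ (2 * n) * Y ≤ c * c ^ (2 * n) * c :=
      mul_le_mul' (mul_le_mul' hYc le_rfl) hYc
    have h2 : c * c ^ (2 * n) * c = c ^ (2 * n + 2) := by
      rw [← pow_succ' c (2 * n), ← pow_succ]
    calc Y * c ^ (2 * n) * Y ≤ c ^ (2 * n + 2) := h2 ▸ h1
      _ = A ^ (2 * n + 2) := by rw [hcA]
      _ < X := hA _ (by omega)

/-- `|a*b| ≤ (max |a| |b|)^2`. -/
theorem gabs_mul_le_sq (a b : G) : gabs (a * b) ≤ max (gabs a) (gabs b) ^ 2 := by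
  haveI : CovariantClass G G (· * ·) (· ≤ ·) := covariantClass_le_of_lt _ _ _
  haveI : CovariantClass G G (Function.swap (· * ·)) (· ≤ ·) := covariantClass_le_of_lt _ _ _
  set c := max (gabs a) (gabs b) with hc
  have hac : gabs a ≤ c := le_max_left _ _
  have hbc : gabs b ≤ c := le_max_right _ _
  rw [pow_two]
  apply max_le
  · exact mul_le_mul' ((gabs_self_le a).trans hac) ((gabs_self_le b).trans hbc)
  · rw [mul_inv_rev]
    exact mul_le_mul' ((gabs_inv_le b).trans hbc) ((gabs_inv_le a).trans hac)

end Aux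

/-- In an ordered group, if `¬(g ∼ h)`, `a ≪ g` and `b ≪ h`, then `a·b ≪ g·h`. -/
theorem archLT_mul_mul {G : Type*} [Group G] [LinearOrder G]
    (hl : ∀ a b c : G, a < b → c * a < c * b)
    (hr : ∀ a b c : G, a < b → a * c < b * c)
    (a b g h : G) (hgh : ¬ ArchEquiv g h) (ha : ArchLT a g) (hb : ArchLT b h) :
    ArchLT (a * b) (g * h) := by
  haveI iL : CovariantClass G G (· * ·) (· < ·) := ⟨fun c x y hxy => hl x y c hxy⟩
  haveI iR : CovariantClass G G (Function.swap (· * ·)) (· < ·) :=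
    ⟨fun c x y hxy => hr x y c hxy⟩
  haveI : CovariantClass G G (· * ·) (· ≤ ·) := covariantClass_le_of_lt _ _ _
  haveI : CovariantClass G G (Function.swap (· * ·)) (· ≤ ·) := covariantClass_le_of_lt _ _ _
  intro n hn
  -- the basic bound on |a*b|^n
  have habn : gabs (a * b) ^ n ≤ max (gabs a) (gabs b) ^ (2 * n) := by
    calc gabs (a * b) ^ n ≤ (max (gabs a) (gabs b) ^ 2) ^ n :=
          pow_le_pow_left' (gabs_mul_le_sq a b) n
      _ = max (gabs a) (gabs b) ^ (2 * n) := by rw [← pow_mul]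
  by_cases hcase : ∃ m : ℕ, 0 < m ∧ gabs g < gabs h ^ m
  · -- g is (weakly) small relative to h
    obtain ⟨m, hm, hgm⟩ := hcase
    have hGH : ∀ k : ℕ, 0 < k → gabs g ^ k ≤ gabs h := by
      intro k hk
      by_contra hcon
      exact hgh ⟨m, k, hm, hk, hgm, not_le.1 hcon⟩
    -- lower bound : gabs h ≤ gabs g * gabs (g*h) * gabs g
    have hlow : gabs h ≤ gabs g * gabs (g * h) * gabs g := by
      apply max_le
      · have h1 : h = g⁻¹ * (g * h) := by group
        calc h = g⁻¹ * (g * h) := h1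
          _ ≤ gabs g * gabs (g * h) := mul_le_mul' (gabs_inv_le g) (gabs_self_le _)
          _ ≤ gabs g * gabs (g * h) * gabs g := le_mul_of_one_le_right' (gabs_aux_one_le g)
      · have h1 : h⁻¹ = (g * h)⁻¹ * g := by group
        calc h⁻¹ = (g * h)⁻¹ * g := h1
          _ ≤ gabs (g * h) * gabs g := mul_le_mul' (gabs_inv_le _) (gabs_self_le g)
          _ ≤ gabs g * (gabs (g * h) * gabs g) := le_mul_of_one_le_left' (gabs_aux_one_le g)
          _ = gabs g * gabs (g * h) * gabs g := (mul_assoc _ _ _).symm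
    have hkey : gabs g * max (gabs b) (gabs a) ^ (2 * n) * gabs g < gabs h :=
      gabs_key hb ha hGH n hn
    have hmax : max (gabs b) (gabs a) = max (gabs a) (gabs b) := max_comm _ _
    rw [hmax] at hkey
    have h2 : gabs g * max (gabs a) (gabs b) ^ (2 * n) * gabs g <
        gabs g * gabs (g * h) * gabs g := hkey.trans_le hlow
    have e1 : ∀ x : G, (gabs g)⁻¹ * (gabs g * x * gabs g) = x * gabs g := by
      intro x; group
    have e2 : ∀ x : G, x * gabs g * (gabs g)⁻¹ = x := by intro x; group
    have h3 := hl _ _ (gabs g)⁻¹ h2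
    rw [e1, e1] at h3
    have h4' := hr _ _ (gabs g)⁻¹ h3
    rw [e2, e2] at h4'
    have h4 : max (gabs a) (gabs b) ^ (2 * n) < gabs (g * h) := h4'
    exact habn.trans_lt h4
  · -- h is (weakly) small relative to g
    push_neg at hcase
    have hHG : ∀ k : ℕ, 0 < k → gabs h ^ k ≤ gabs g := fun k hk => hcase k hk
    -- lower bound : gabs g ≤ gabs h * gabs (g*h) * gabs h
    have hlow : gabs g ≤ gabs h * gabs (g * h) * gabs h := by
      apply max_le
      · have h1 : g = (g * h) * h⁻¹ := by group
        calc g = (g * h) * h⁻¹ := h1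
          _ ≤ gabs (g * h) * gabs h := mul_le_mul' (gabs_self_le _) (gabs_inv_le h)
          _ ≤ gabs h * (gabs (g * h) * gabs h) := le_mul_of_one_le_left' (gabs_aux_one_le h)
          _ = gabs h * gabs (g * h) * gabs h := (mul_assoc _ _ _).symm
      · have h1 : g⁻¹ = h * (g * h)⁻¹ := by group
        calc g⁻¹ = h * (g * h)⁻¹ := h1
          _ ≤ gabs h * gabs (g * h) := mul_le_mul' (gabs_self_le h) (gabs_inv_le _)
          _ ≤ gabs h * gabs (g * h) * gabs h := le_mul_of_one_le_right' (gabs_aux_one_le h)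
    have hkey : gabs h * max (gabs a) (gabs b) ^ (2 * n) * gabs h < gabs g :=
      gabs_key ha hb hHG n hn
    have h2 : gabs h * max (gabs a) (gabs b) ^ (2 * n) * gabs h <
        gabs h * gabs (g * h) * gabs h := hkey.trans_le hlow
    have e1 : ∀ x : G, (gabs h)⁻¹ * (gabs h * x * gabs h) = x * gabs h := by
      intro x; group
    have e2 : ∀ x : G, x * gabs h * (gabs h)⁻¹ = x := by intro x; group
    have h3 := hl _ _ (gabs h)⁻¹ h2
    rw [e1, e1] at h3
    have h4' := hr _ _ (gabs h)⁻¹ h3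
    rw [e2, e2] at h4'
    have h4 : max (gabs a) (gabs b) ^ (2 * n) < gabs (g * h) := h4'
    exact habn.trans_lt h4
end

section
/- Let (G, <) be an ordered group, let x, y ∈ G with y ≠ 1, and let k, l ∈ ℤ with k ≠ l. If x⁻¹·y^k·x = y^l, then y ≪ x. -/
section AuxNat

/-- `L^m` dominates `K^m` by at least `2^(m-1)`. -/
private lemma nat_pow_gap {K L : ℕ} (hL : 2 ≤ L) (hKL : K < L) :
    ∀ m, 1 ≤ m → K ^ m + 2 ^ (m - 1) ≤ L ^ m := by
  intro m hm
  induction m with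
  | zero => omega
  | succ m ih =>
    rcases Nat.lt_or_ge m 1 with h1 | h1
    · interval_cases m
      simpa using hKL
    · have ih' := ih h1
      have e1 : L ^ (m + 1) = L * L ^ m := by ring
      have e2 : K ^ (m + 1) = K * K ^ m := by ring
      have e3 : m + 1 - 1 = m := by omega
      have e4 : (2 : ℕ) ^ m = 2 * 2 ^ (m - 1) := by
        rw [← pow_succ']
        congr 1
        omega
      have h5 : L * (K ^ m + 2 ^ (m - 1)) ≤ L * L ^ m :=
        Nat.mul_le_mul_left _ ih'
      have h6 : (K + 1) * K ^ m + 2 * 2 ^ (m - 1) ≤ L * (K ^ m + 2 ^ (m - 1)) := by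
        have : (K + 1) * K ^ m + 2 * 2 ^ (m - 1) ≤ L * K ^ m + L * 2 ^ (m - 1) :=
          Nat.add_le_add (Nat.mul_le_mul_right _ (by omega)) (Nat.mul_le_mul_right _ hL)
        calc (K + 1) * K ^ m + 2 * 2 ^ (m - 1) ≤ L * K ^ m + L * 2 ^ (m - 1) := this
          _ = L * (K ^ m + 2 ^ (m - 1)) := by ring
      have h7 : K * K ^ m ≤ (K + 1) * K ^ m := Nat.mul_le_mul_right _ (by omega)
      rw [e1, e2, e3, e4]
      omega

/-- A linear function is eventually dominated by `2^(m-1)`. -/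
private lemma nat_lin_lt_pow (c : ℕ) : ∃ m, 1 ≤ m ∧ c * m < 2 ^ (m - 1) := by
  refine ⟨2 ^ (c + 3), Nat.one_le_two_pow, ?_⟩
  have h1 : c < 2 ^ (c + 3) := lt_of_lt_of_le (Nat.lt_two_pow_self (n := c))
    (Nat.pow_le_pow_right (by norm_num) (by omega))
  have h2 : c * 2 ^ (c + 3) < 2 ^ (c + 3) * 2 ^ (c + 3) :=
    Nat.mul_lt_mul_of_lt_of_le h1 (le_refl _) (Nat.pow_pos (by norm_num))
  have h3 : (2 : ℕ) ^ (c + 3) * 2 ^ (c + 3) = 2 ^ (2 * c + 6) := by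
    rw [← pow_add]; congr 1; omega
  have h4 : 2 * c + 7 ≤ 8 * 2 ^ c := by
    have := Nat.lt_two_pow_self (n := c)
    have h1c : 1 ≤ 2 ^ c := Nat.one_le_two_pow
    omega
  have h5 : (2 : ℕ) ^ (2 * c + 6) ≤ 2 ^ (2 ^ (c + 3) - 1) := by
    apply Nat.pow_le_pow_right (by norm_num)
    have e : (2 : ℕ) ^ (c + 3) = 8 * 2 ^ c := by
      rw [pow_add]; ring
    omega
  omega

/-- The crucial numeric fact: if `K < L` and `2 ≤ L`, then `2(nm) + K^m < L^m`
for some positive `m`. -/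
private lemma nat_main (n K L : ℕ) (hL : 2 ≤ L) (hKL : K < L) :
    ∃ m, 0 < m ∧ 2 * (n * m) + K ^ m < L ^ m := by
  obtain ⟨m, hm, hlt⟩ := nat_lin_lt_pow (2 * n)
  refine ⟨m, hm, ?_⟩
  have hgap := nat_pow_gap hL hKL m hm
  have : 2 * n * m = 2 * (n * m) := by ring
  omega

end AuxNat

section AuxGroup

variable {G : Type*} [Group G] [LinearOrder G] [MulLeftStrictMono G] [MulRightStrictMono G]

private lemma gabs_inv (g : G) : gabs g⁻¹ = gabs g := by
  simp [gabs, max_comm]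

private lemma le_gabs (g : G) : g ≤ gabs g := le_max_left _ _

private lemma inv_le_gabs (g : G) : g⁻¹ ≤ gabs g := le_max_right _ _

private lemma one_le_gabs (g : G) : 1 ≤ gabs g := by
  haveI := mulLeftMono_of_mulLeftStrictMono G
  rcases le_total 1 g with h | h
  · exact h.trans (le_gabs g)
  · have : 1 ≤ g⁻¹ := by
      have := mul_le_mul_right h g⁻¹
      simpa using this
    exact this.trans (inv_le_gabs g)

private lemma one_lt_gabs {g : G} (h : g ≠ 1) : 1 < gabs g := by
  haveI := mulLeftMono_of_mulLeftStrictMono G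
  rcases lt_trichotomy g 1 with h1 | h1 | h1
  · have : 1 < g⁻¹ := by
      have := hl_aux h1 g⁻¹
      simpa using this
    exact lt_of_lt_of_le this (inv_le_gabs g)
  · exact absurd h1 h
  · exact lt_of_lt_of_le h1 (le_gabs g)
where
  hl_aux {a b : G} (hab : a < b) (c : G) : c * a < c * b := mul_lt_mul_right hab c

private lemma gabs_of_one_le {g : G} (h : 1 ≤ g) : gabs g = g := by
  haveI := mulLeftMono_of_mulLeftStrictMono G
  apply max_eq_left
  have h1 : g⁻¹ ≤ 1 := by
    have := mul_le_mul_right h g⁻¹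
    simpa using this
  exact h1.trans h

private lemma gabs_zpow_of_one_le {g : G} (h : 1 ≤ g) (j : ℤ) :
    gabs (g ^ j) = gabs g ^ j.natAbs := by
  haveI := mulLeftMono_of_mulLeftStrictMono G
  rw [gabs_of_one_le h]
  rcases le_or_gt 0 j with hj | hj
  · have h1 : 1 ≤ g ^ j := one_le_zpow h hj
    rw [gabs_of_one_le h1, ← zpow_natCast]
    congr 1
    omega
  · have h0 : g ^ j = (g ^ (-j))⁻¹ := by
      rw [← zpow_neg, neg_neg]
    have h1 : 1 ≤ g ^ (-j) := one_le_zpow h (by omega)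
    rw [h0, gabs_inv, gabs_of_one_le h1, ← zpow_natCast]
    congr 1
    omega

private lemma gabs_zpow (g : G) (j : ℤ) : gabs (g ^ j) = gabs g ^ j.natAbs := by
  haveI := mulLeftMono_of_mulLeftStrictMono G
  rcases le_total 1 g with h | h
  · exact gabs_zpow_of_one_le h j
  · have h1 : 1 ≤ g⁻¹ := by
      have := mul_le_mul_right h g⁻¹
      simpa using this
    have h0 : g ^ j = (g⁻¹ ^ (-j)) := by
      rw [inv_zpow, ← zpow_neg, neg_neg]
    rw [h0, gabs_zpow_of_one_le h1, gabs_inv]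
    congr 1
    omega

private lemma conj_le_conj (x : G) {a b : G} (h : a ≤ b) : x⁻¹ * a * x ≤ x⁻¹ * b * x := by
  haveI := mulLeftMono_of_mulLeftStrictMono G
  haveI := mulRightMono_of_mulRightStrictMono G
  exact mul_le_mul_left (mul_le_mul_right h x⁻¹) x

private lemma conj_gabs (x g : G) : x⁻¹ * gabs g * x = gabs (x⁻¹ * g * x) := by
  have hinv : (x⁻¹ * g * x)⁻¹ = x⁻¹ * g⁻¹ * x := by group
  rcases le_total g g⁻¹ with h | h
  · rw [gabs, max_eq_right h, gabs, hinv, max_eq_right (conj_le_conj x h)]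
  · rw [gabs, max_eq_left h, gabs, hinv, max_eq_left (conj_le_conj x h)]

private lemma gabs_pow_le (x : G) (m : ℕ) : gabs (x ^ m) ≤ gabs x ^ m := by
  haveI := mulLeftMono_of_mulLeftStrictMono G
  haveI := mulRightMono_of_mulRightStrictMono G
  apply max_le
  · exact pow_le_pow_left' (le_gabs x) m
  · rw [← inv_pow]
    exact pow_le_pow_left' (inv_le_gabs x) m

/-- The main case: `|k| < |l|`. -/
private lemma archLT_main (x y : G) (hy : y ≠ 1) (k l : ℤ) (hk0 : k ≠ 0)
    (hKL : k.natAbs < l.natAbs)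
    (hconj : x⁻¹ * y ^ k * x = y ^ l) : ArchLT y x := by
  haveI := mulLeftMono_of_mulLeftStrictMono G
  haveI := mulRightMono_of_mulRightStrictMono G
  -- first: k ≠ 0 or not; we only need L ≥ 1; handle k = 0 case via L ≥ 1.
  intro n hn
  by_contra hcon
  push_neg at hcon
  set a := gabs y with ha_def
  have ha : 1 < a := one_lt_gabs hy
  -- iterated conjugation
  have key : ∀ m : ℕ, (x ^ m)⁻¹ * y ^ (k ^ m) * x ^ m = y ^ (l ^ m) := by
    intro m
    induction m with
    | zero => simp
    | succ m ih =>
      have e1 : y ^ (k ^ (m + 1)) = (y ^ (k ^ m)) ^ k := by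
        rw [← zpow_mul, ← pow_succ]
      have e2 : (x ^ m)⁻¹ * (y ^ (k ^ m)) ^ k * (x ^ m) = (y ^ (l ^ m)) ^ k := by
        have := conj_zpow (i := k) (a := (x ^ m)⁻¹) (b := y ^ (k ^ m))
        simpa [ih] using this.symm
      have e3 : x⁻¹ * (y ^ (l ^ m)) ^ k * x = (y ^ l) ^ (l ^ m) := by
        have h1 : (y ^ (l ^ m)) ^ k = (y ^ k) ^ (l ^ m) := by
          rw [← zpow_mul, ← zpow_mul, mul_comm]
        rw [h1]
        have := conj_zpow (i := (l ^ m)) (a := x⁻¹) (b := y ^ k)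
        simpa [hconj] using this.symm
      calc (x ^ (m + 1))⁻¹ * y ^ (k ^ (m + 1)) * x ^ (m + 1)
          = x⁻¹ * ((x ^ m)⁻¹ * (y ^ (k ^ m)) ^ k * x ^ m) * x := by
            rw [e1, pow_succ]; group
        _ = x⁻¹ * (y ^ (l ^ m)) ^ k * x := by rw [e2]
        _ = (y ^ l) ^ (l ^ m) := e3
        _ = y ^ (l ^ (m + 1)) := by rw [← zpow_mul, ← pow_succ']
  -- choose m
  have hL2 : 2 ≤ l.natAbs := by
    have : k.natAbs ≠ 0 := Int.natAbs_ne_zero.2 hk0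
    omega
  obtain ⟨m, hm, hmlt⟩ := nat_main n k.natAbs l.natAbs hL2 hKL
  -- take gabs of the key identity
  have e1 : a ^ (l.natAbs ^ m) = (x ^ m)⁻¹ * a ^ (k.natAbs ^ m) * x ^ m := by
    have := congrArg gabs (key m)
    rw [← conj_gabs (x ^ m) (y ^ (k ^ m)), gabs_zpow, gabs_zpow, Int.natAbs_pow,
      Int.natAbs_pow] at this
    exact this.symm
  -- bound the conjugators
  have hxm : gabs (x ^ m) ≤ a ^ (n * m) := by
    calc gabs (x ^ m) ≤ gabs x ^ m := gabs_pow_le x m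
      _ ≤ (a ^ n) ^ m := pow_le_pow_left' hcon m
      _ = a ^ (n * m) := by rw [← pow_mul]
  have h1 : (x ^ m)⁻¹ ≤ a ^ (n * m) := (inv_le_gabs _).trans hxm
  have h2 : x ^ m ≤ a ^ (n * m) := (le_gabs _).trans hxm
  have e2 : (x ^ m)⁻¹ * a ^ (k.natAbs ^ m) * x ^ m
      ≤ a ^ (n * m + k.natAbs ^ m + n * m) := by
    calc (x ^ m)⁻¹ * a ^ (k.natAbs ^ m) * x ^ m
        ≤ a ^ (n * m) * a ^ (k.natAbs ^ m) * a ^ (n * m) :=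
          mul_le_mul' (mul_le_mul' h1 (le_refl _)) h2
      _ = a ^ (n * m + k.natAbs ^ m + n * m) := by rw [← pow_add, ← pow_add]
  have e3 : a ^ (l.natAbs ^ m) ≤ a ^ (n * m + k.natAbs ^ m + n * m) := e1 ▸ e2
  have e4 : l.natAbs ^ m ≤ n * m + k.natAbs ^ m + n * m :=
    (pow_le_pow_iff_right' ha).1 e3
  have : 2 * (n * m) = n * m + n * m := by ring
  omega

end AuxGroup

/-- In an ordered group, if `x⁻¹ y^k x = y^l` with `k ≠ l` and `y ≠ 1`, then `y ≪ x`. -/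
theorem archLT_of_conj_zpow {G : Type*} [Group G] [LinearOrder G]
    (hl : ∀ a b c : G, a < b → c * a < c * b)
    (hr : ∀ a b c : G, a < b → a * c < b * c)
    (x y : G) (hy : y ≠ 1) (k l : ℤ) (hkl : k ≠ l)
    (hconj : x⁻¹ * y ^ k * x = y ^ l) :
    ArchLT y x := by
  haveI i1 : MulLeftStrictMono G := ⟨fun c a b h => hl a b c h⟩
  haveI i2 : MulRightStrictMono G := ⟨fun c a b h => hr a b c h⟩
  haveI := mulLeftMono_of_mulLeftStrictMono G
  haveI := mulRightMono_of_mulRightStrictMono G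
  have ha : 1 < gabs y := one_lt_gabs hy
  -- powers of y with nonzero exponent are nontrivial
  have hpow_ne : ∀ j : ℤ, j ≠ 0 → y ^ j ≠ 1 := by
    intro j hj h1
    have := congrArg gabs h1
    rw [gabs_zpow] at this
    have h2 : 1 < gabs y ^ j.natAbs := one_lt_pow' ha (by omega)
    rw [this] at h2
    simp [gabs] at h2
  -- k ≠ 0
  have hk0 : k ≠ 0 := by
    rintro rfl
    have : (1 : G) = y ^ l := by simpa using hconj
    exact hpow_ne l (by omega) this.symm
  -- l ≠ 0
  have hl0 : l ≠ 0 := by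
    rintro rfl
    have h1 : x⁻¹ * y ^ k * x = 1 := by simpa using hconj
    have h2 : y ^ k = 1 := by
      have := congrArg (fun g => x * g * x⁻¹) h1
      simpa [mul_assoc] using this
    exact hpow_ne k hk0 h2
  -- l ≠ -k : conjugation preserves sign
  have hlk : l ≠ -k := by
    rintro rfl
    have hb : y ^ k ≠ 1 := hpow_ne k hk0
    have hconj' : x⁻¹ * y ^ k * x = (y ^ k)⁻¹ := by
      rw [hconj, ← zpow_neg]
    rcases lt_trichotomy (y ^ k) 1 with h1 | h1 | h1
    · have h2 : x⁻¹ * y ^ k * x < 1 := by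
        have := hr _ _ x (hl _ _ x⁻¹ h1)
        simpa using this
      rw [hconj'] at h2
      have h3 : 1 < (y ^ k)⁻¹ := by
        have := hl _ _ (y ^ k)⁻¹ h1
        simpa using this
      exact absurd h2 (not_lt.2 h3.le)
    · exact hb h1
    · have h2 : 1 < x⁻¹ * y ^ k * x := by
        have := hr _ _ x (hl _ _ x⁻¹ h1)
        simpa using this
      rw [hconj'] at h2
      have h3 : (y ^ k)⁻¹ < 1 := by
        have := hl _ _ (y ^ k)⁻¹ h1
        simpa using this
      exact absurd h2 (not_lt.2 h3.le)
  -- natAbs are distinct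
  have hne : k.natAbs ≠ l.natAbs := by
    intro h
    rcases Int.natAbs_eq_natAbs_iff.1 h with h | h
    · exact hkl h
    · exact hlk (by omega)
  rcases Nat.lt_or_ge k.natAbs l.natAbs with hKL | hKL
  · exact archLT_main x y hy k l hk0 hKL hconj
  · have hLK : l.natAbs < k.natAbs := by omega
    have hconj' : (x⁻¹)⁻¹ * y ^ l * x⁻¹ = y ^ k := by
      rw [inv_inv, ← hconj]
      group
    have h := archLT_main x⁻¹ y hy l k hl0 hLK hconj'
    intro n hn
    have := h n hn
    rwa [gabs_inv] at this
end

section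
/- Let (G, <) be an ordered group, let x, y₁, y₂ ∈ G with y₁ ≠ 1, and let k₁, l₁, k₂, l₂ ∈ ℤ with k₁ ≠ l₁ and k₂ ≠ l₂. If x⁻¹·y₁^{k₁}·x = y₁^{l₁}, x⁻¹·y₂^{k₂}·x = y₂^{l₂}, and y₁ ∼ y₂, then k₁·l₂ = k₂·l₁. -/
section Aux

variable {G : Type*} [Group G]

/-- conjugation commutes with powers -/
lemma myConj_pow (u g : G) (t : ℕ) : (u⁻¹ * g * u) ^ t = u⁻¹ * g ^ t * u := by
  induction t with
  | zero => simp
  | succ n ih => rw [pow_succ, pow_succ, ih]; group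

/-- iterated conjugation of powers -/
lemma myConj_iter (x a : G) (p q : ℕ) (h : x⁻¹ * a ^ p * x = a ^ q) :
    ∀ N : ℕ, (x ^ N)⁻¹ * a ^ p ^ N * x ^ N = a ^ q ^ N := by
  intro N
  induction N with
  | zero => simp
  | succ n ih =>
    have h1 : (x ^ n)⁻¹ * a ^ (p ^ n * p) * x ^ n = a ^ (q ^ n * p) := by
      rw [pow_mul, ← myConj_pow, ih, ← pow_mul]
    calc (x ^ (n+1))⁻¹ * a ^ p ^ (n+1) * x ^ (n+1)
        = x⁻¹ * ((x ^ n)⁻¹ * a ^ (p ^ n * p) * x ^ n) * x := by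
          rw [pow_succ x n, pow_succ p n]; group
      _ = x⁻¹ * a ^ (q ^ n * p) * x := by rw [h1]
      _ = x⁻¹ * (a ^ p) ^ q ^ n * x := by rw [← pow_mul']
      _ = (x⁻¹ * a ^ p * x) ^ q ^ n := (myConj_pow _ _ _).symm
      _ = a ^ q ^ (n+1) := by rw [h, ← pow_mul, ← pow_succ']

variable [LinearOrder G]
  [CovariantClass G G (· * ·) (· < ·)] [CovariantClass G G (Function.swap (· * ·)) (· < ·)]
  [CovariantClass G G (· * ·) (· ≤ ·)] [CovariantClass G G (Function.swap (· * ·)) (· ≤ ·)]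

lemma myConj_lt (x : G) {g h : G} (hgh : g < h) : x⁻¹ * g * x < x⁻¹ * h * x :=
  mul_lt_mul_left (mul_lt_mul_right hgh _) _

/-- The core counting argument. -/
lemma core_le (x a b : G) (ha : 1 < a) (hb : 1 < b)
    (p₁ q₁ p₂ q₂ : ℕ) (hp₁ : 0 < p₁) (hp₂ : 0 < p₂) (hq₂ : 0 < q₂)
    (h1 : x⁻¹ * a ^ p₁ * x = a ^ q₁) (h2 : x⁻¹ * b ^ p₂ * x = b ^ q₂)
    (m n : ℕ) (hm : 0 < m) (hn : 0 < n) (hab : a < b ^ m) (hba : b < a ^ n) :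
    q₁ * p₂ ≤ q₂ * p₁ := by
  by_contra hlt
  push_neg at hlt
  set s : ℕ := q₂ * p₁ with hs_def
  have hs : 0 < s := Nat.mul_pos hq₂ hp₁
  -- choose N with (m*n) * s^N < (q₁*p₂)^N
  obtain ⟨N, hN⟩ : ∃ N : ℕ, (m * n) * s ^ N < (q₁ * p₂) ^ N := by
    have hsQ : (0 : ℚ) < (s : ℚ) := by exact_mod_cast hs
    have h1lt : (1 : ℚ) < ((s : ℚ) + 1) / s := by
      rw [one_lt_div hsQ]; linarith
    obtain ⟨N, hN⟩ := pow_unbounded_of_one_lt (R := ℚ) ((m * n : ℕ) : ℚ) h1lt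
    refine ⟨N, ?_⟩
    have key : ((m * n : ℕ) : ℚ) * (s : ℚ) ^ N < ((s : ℚ) + 1) ^ N := by
      have := mul_lt_mul_of_pos_right hN (pow_pos hsQ N)
      rwa [div_pow, div_mul_cancel₀ _ (by positivity)] at this
    have hle : ((s : ℚ) + 1) ^ N ≤ ((q₁ * p₂ : ℕ) : ℚ) ^ N := by
      apply pow_le_pow_left₀ (by positivity)
      have : (s : ℕ) + 1 ≤ q₁ * p₂ := hlt
      exact_mod_cast this
    have := key.trans_le hle
    exact_mod_cast this
  set T : ℕ := (p₁ * p₂) ^ N with hT_def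
  have hT : T ≠ 0 := by positivity
  -- conjugation by x^N
  have e1 : (x ^ N)⁻¹ * a ^ p₁ ^ N * x ^ N = a ^ q₁ ^ N := myConj_iter x a p₁ q₁ h1 N
  have e2 : (x ^ N)⁻¹ * b ^ p₂ ^ N * x ^ N = b ^ q₂ ^ N := myConj_iter x b p₂ q₂ h2 N
  have E1 : (x ^ N)⁻¹ * a ^ T * x ^ N = a ^ (q₁ * p₂) ^ N := by
    rw [hT_def, mul_pow, mul_pow, pow_mul, ← myConj_pow, e1, ← pow_mul]
  have E2 : (x ^ N)⁻¹ * b ^ T * x ^ N = b ^ (s ^ N) := by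
    rw [hT_def, hs_def, mul_pow, mul_pow, Nat.mul_comm (p₁ ^ N), pow_mul, ← myConj_pow, e2,
      ← pow_mul, Nat.mul_comm]
  -- chain of inequalities
  have c1 : a ^ T < b ^ (m * T) := by
    rw [pow_mul]
    exact pow_lt_pow_left' hT hab
  have c2 : (x ^ N)⁻¹ * b ^ (m * T) * x ^ N = b ^ (s ^ N * m) := by
    rw [pow_mul', ← myConj_pow, E2, ← pow_mul]
  have c3 : a ^ (q₁ * p₂) ^ N < b ^ (s ^ N * m) := by
    rw [← E1, ← c2]
    exact myConj_lt _ c1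
  have c4 : b ^ (s ^ N * m) < a ^ (n * (s ^ N * m)) := by
    rw [pow_mul a n]
    exact pow_lt_pow_left' (by positivity) hba
  have c5 : a ^ (q₁ * p₂) ^ N < a ^ (n * (s ^ N * m)) := c3.trans c4
  have cexp : (q₁ * p₂) ^ N < n * (s ^ N * m) := by
    by_contra hc
    push_neg at hc
    exact absurd (pow_le_pow_right' ha.le hc) c5.not_ge
  have : (m * n) * s ^ N = n * (s ^ N * m) := by ring
  omega

/-- `gabs` of a nontrivial element is `> 1`. -/
lemma one_lt_gabs_s12 {y : G} (hy : y ≠ 1) : 1 < gabs y := by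
  rcases lt_trichotomy y 1 with h | h | h
  · exact lt_max_of_lt_right (one_lt_inv'.2 h)
  · exact absurd h hy
  · exact lt_max_of_lt_left h

/-- Reduction: transfer the conjugation relation to `gabs y` with natural exponents. -/
lemma reduce (x y : G) (k l : ℤ) (hkl : k ≠ l) (hy : y ≠ 1)
    (h : x⁻¹ * y ^ k * x = y ^ l) :
    0 < k.natAbs ∧ 0 < l.natAbs ∧ (0 < k ↔ 0 < l) ∧
      x⁻¹ * (gabs y) ^ k.natAbs * x = (gabs y) ^ l.natAbs := by
  set a := gabs y with ha_def
  have ha : 1 < a := one_lt_gabs_s12 hy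
  -- conjugation relation for a
  have hconj : x⁻¹ * a ^ k * x = a ^ l := by
    rcases lt_or_gt_of_ne hy with hlt | hgt
    · have hmax : a = y⁻¹ := max_eq_right (le_of_lt (hlt.trans (one_lt_inv'.2 hlt)))
      rw [hmax, inv_zpow, inv_zpow, ← mul_inv_rev, ← h]; group
    · have hmax : a = y := max_eq_left (le_of_lt ((inv_lt_one'.2 hgt).trans hgt))
      rw [hmax]; exact h
  -- sign analysis
  have zpow_sign : ∀ t : ℤ, (0 < t → 1 < a ^ t) ∧ (t = 0 → a ^ t = 1) ∧ (t < 0 → a ^ t < 1) := by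
    intro t
    refine ⟨fun ht => ?_, fun ht => by simp [ht], fun ht => ?_⟩
    · have : a ^ t = a ^ t.toNat := by rw [← zpow_natCast, Int.toNat_of_nonneg ht.le]
      rw [this]
      exact one_lt_pow' ha (by omega)
    · have h1 : (1:G) < a ^ (-t) := by
        have : a ^ (-t) = a ^ (-t).toNat := by
          rw [← zpow_natCast, Int.toNat_of_nonneg (by omega)]
        rw [this]
        exact one_lt_pow' ha (by omega)
      have : a ^ t = (a ^ (-t))⁻¹ := by rw [← zpow_neg, neg_neg]
      rw [this]
      exact inv_lt_one'.2 h1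
  have conj_one_lt : ∀ g : G, 1 < g ↔ 1 < x⁻¹ * g * x := by
    intro g
    constructor
    · intro hg
      have := myConj_lt x hg
      simpa using this
    · intro hg
      by_contra hc
      push_neg at hc
      rcases hc.lt_or_eq with hc | hc
      · have := myConj_lt x hc
        simp only [mul_one, inv_mul_cancel] at this
        exact absurd (this.trans hg) (lt_irrefl _)
      · rw [hc] at hg; simp at hg
  have hsign : (0 < k ↔ 0 < l) ∧ k ≠ 0 ∧ l ≠ 0 := by
    have trich : ∀ t u : ℤ, (x⁻¹ * a ^ t * x = a ^ u) → 0 < t → 0 < u := by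
      intro t u he ht
      have h1 : 1 < a ^ t := (zpow_sign t).1 ht
      have h2 : 1 < a ^ u := by rw [← he]; exact (conj_one_lt _).1 h1
      rcases lt_trichotomy u 0 with hu | hu | hu
      · exact absurd ((zpow_sign u).2.2 hu) (by exact fun hcc => absurd (hcc.trans h2) (lt_irrefl _))
      · rw [(zpow_sign u).2.1 hu] at h2; exact absurd h2 (lt_irrefl _)
      · exact hu
    have hconj' : x⁻¹ * a ^ (-k) * x = a ^ (-l) := by
      rw [zpow_neg, zpow_neg, ← mul_inv_rev, ← hconj]; group
    have hk0 : k = 0 → l = 0 := by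
      intro hk
      rw [hk] at hconj
      simp at hconj
      rcases lt_trichotomy l 0 with hu | hu | hu
      · exact absurd ((zpow_sign l).2.2 hu) (by rw [← hconj]; exact lt_irrefl _)
      · exact hu
      · exact absurd ((zpow_sign l).1 hu) (by rw [← hconj]; exact lt_irrefl _)
    have hl0 : l = 0 → k = 0 := by
      intro hlz
      by_contra hk
      rcases lt_or_gt_of_ne hk with hkneg | hkpos
      · have := trich (-k) (-l) hconj' (by omega); omega
      · have := trich k l hconj hkpos; omega
    constructor
    · constructor
      · exact trich k l hconj
      · intro hlpos
        by_contra hk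
        push_neg at hk
        rcases hk.lt_or_eq with hkneg | hkz
        · have := trich (-k) (-l) hconj' (by omega); omega
        · have := hk0 hkz; omega
    · constructor
      · intro hkz; exact hkl (by rw [hkz, hk0 hkz])
      · intro hlz; exact hkl (by rw [hlz, hl0 hlz])
    -- done
  obtain ⟨hiff, hk0, hl0⟩ := hsign
  refine ⟨by omega, by omega, hiff, ?_⟩
  rcases lt_or_gt_of_ne hk0 with hkneg | hkpos
  · have hlneg : l < 0 := by omega
    have hconj' : x⁻¹ * a ^ (-k) * x = a ^ (-l) := by
      rw [zpow_neg, zpow_neg, ← mul_inv_rev, ← hconj]; group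
    have e1 : a ^ ((-k).toNat : ℕ) = a ^ (-k) := by
      rw [← zpow_natCast, Int.toNat_of_nonneg (by omega)]
    have e2 : a ^ ((-l).toNat : ℕ) = a ^ (-l) := by
      rw [← zpow_natCast, Int.toNat_of_nonneg (by omega)]
    have hknat : k.natAbs = (-k).toNat := by omega
    have hlnat : l.natAbs = (-l).toNat := by omega
    rw [hknat, hlnat, e1, e2]
    exact hconj'
  · have hlpos : 0 < l := hiff.1 hkpos
    have e1 : a ^ (k.toNat : ℕ) = a ^ k := by
      rw [← zpow_natCast, Int.toNat_of_nonneg hkpos.le]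
    have e2 : a ^ (l.toNat : ℕ) = a ^ l := by
      rw [← zpow_natCast, Int.toNat_of_nonneg hlpos.le]
    have hknat : k.natAbs = k.toNat := by omega
    have hlnat : l.natAbs = l.toNat := by omega
    rw [hknat, hlnat, e1, e2]
    exact hconj

end Aux

/-- In an ordered group, if `x⁻¹ y₁^{k₁} x = y₁^{l₁}` and `x⁻¹ y₂^{k₂} x = y₂^{l₂}`
with `k₁ ≠ l₁`, `k₂ ≠ l₂`, `y₁ ≠ 1`, and `y₁ ∼ y₂`, then `k₁·l₂ = k₂·l₁`. -/
theorem conj_zpow_archEquiv {G : Type*} [Group G] [LinearOrder G]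
    (hl : ∀ a b c : G, a < b → c * a < c * b)
    (hr : ∀ a b c : G, a < b → a * c < b * c)
    (x y₁ y₂ : G) (hy₁ : y₁ ≠ 1) (k₁ l₁ k₂ l₂ : ℤ)
    (hk₁l₁ : k₁ ≠ l₁) (hk₂l₂ : k₂ ≠ l₂)
    (hconj₁ : x⁻¹ * y₁ ^ k₁ * x = y₁ ^ l₁)
    (hconj₂ : x⁻¹ * y₂ ^ k₂ * x = y₂ ^ l₂)
    (hequiv : ArchEquiv y₁ y₂) :
    k₁ * l₂ = k₂ * l₁ := by
  haveI i1 : CovariantClass G G (· * ·) (· < ·) := ⟨fun c a b h => hl a b c h⟩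
  haveI i2 : CovariantClass G G (Function.swap (· * ·)) (· < ·) := ⟨fun c a b h => hr a b c h⟩
  haveI i3 : CovariantClass G G (· * ·) (· ≤ ·) := covariantClass_le_of_lt _ _ _
  haveI i4 : CovariantClass G G (Function.swap (· * ·)) (· ≤ ·) := covariantClass_le_of_lt _ _ _
  obtain ⟨m, n, hm, hn, h12, h21⟩ := hequiv
  have hg1 : 1 < gabs y₁ := one_lt_gabs_s12 hy₁
  have hg2 : 1 < gabs y₂ := by
    by_contra hc
    push_neg at hc
    have : gabs y₂ ^ m ≤ 1 := pow_le_one' hc m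
    exact absurd (hg1.trans h12) (by exact fun h => absurd (h.trans_le this) (lt_irrefl _))
  have hy₂ : y₂ ≠ 1 := by
    intro h
    rw [h] at hg2
    simp [gabs] at hg2
  obtain ⟨hp₁, hq₁, hsign₁, hc₁⟩ := reduce x y₁ k₁ l₁ hk₁l₁ hy₁ hconj₁
  obtain ⟨hp₂, hq₂, hsign₂, hc₂⟩ := reduce x y₂ k₂ l₂ hk₂l₂ hy₂ hconj₂
  have key1 : l₁.natAbs * k₂.natAbs ≤ l₂.natAbs * k₁.natAbs :=
    core_le x (gabs y₁) (gabs y₂) hg1 hg2 k₁.natAbs l₁.natAbs k₂.natAbs l₂.natAbs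
      hp₁ hp₂ hq₂ hc₁ hc₂ m n hm hn h12 h21
  have key2 : l₂.natAbs * k₁.natAbs ≤ l₁.natAbs * k₂.natAbs :=
    core_le x (gabs y₂) (gabs y₁) hg2 hg1 k₂.natAbs l₂.natAbs k₁.natAbs l₁.natAbs
      hp₂ hp₁ hq₁ hc₂ hc₁ n m hn hm h21 h12
  have keq : l₁.natAbs * k₂.natAbs = l₂.natAbs * k₁.natAbs := le_antisymm key1 key2
  have habs : (k₁ * l₂).natAbs = (k₂ * l₁).natAbs := by
    rw [Int.natAbs_mul, Int.natAbs_mul, Nat.mul_comm, ← keq, Nat.mul_comm]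
  have hpos : 0 < k₁ * l₂ ↔ 0 < k₂ * l₁ := by
    rw [mul_pos_iff, mul_pos_iff]
    omega
  have final : ∀ u v : ℤ, u.natAbs = v.natAbs → (0 < u ↔ 0 < v) → u = v := by
    intro u v h1 h2; omega
  exact final _ _ habs hpos
end

section
/- For any group G, the space of orders X(G), i.e., the set of all positive cones of G, is a closed subset of 2^G with the product topology; consequently X(G) is compact. -/
/-- `P` is a positive cone on the group `G`: `G = P ⊔ P⁻¹ ⊔ {1}`, `P·P ⊆ P`,
and `P` is invariant under conjugation. -/
def IsPositiveCone {G : Type*} [Group G] (P : Set G) : Prop :=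
  (∀ g : G, g ∈ P ∨ g⁻¹ ∈ P ∨ g = 1) ∧
  (∀ g : G, g ∈ P → g⁻¹ ∉ P) ∧
  (1 : G) ∉ P ∧
  (∀ a b : G, a ∈ P → b ∈ P → a * b ∈ P) ∧
  (∀ g a : G, a ∈ P → g * a * g⁻¹ ∈ P)

/-- The space of orders `X(G)` of `G`, as a subset of `2^G = G → Bool`
(with its product topology, `Bool` being discrete). -/
def SpaceOfOrders (G : Type*) [Group G] : Set (G → Bool) :=
  {P | IsPositiveCone {g : G | P g = true}}

lemma aux3 {G : Type*} (a b c : G) (C : Set (Bool × Bool × Bool)) :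
    IsClosed {P : G → Bool | (P a, P b, P c) ∈ C} :=
  (isClosed_discrete C).preimage
    ((continuous_apply a).prodMk ((continuous_apply b).prodMk (continuous_apply c)))

/-- For any group `G`, the space of orders `X(G)` is a closed subset of `2^G`, and
consequently compact. -/
theorem spaceOfOrders_isClosed_isCompact (G : Type*) [Group G] :
    IsClosed (SpaceOfOrders G) ∧ IsCompact (SpaceOfOrders G) := by
  have hc : IsClosed (SpaceOfOrders G) := by
    have heq : SpaceOfOrders G =
        (⋂ g : G, {P : G → Bool | (P g, P g⁻¹, P 1) ∈
          {x : Bool × Bool × Bool | x.1 = true ∨ x.2.1 = true ∨ g = 1}}) ∩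
        (⋂ g : G, {P : G → Bool | (P g, P g⁻¹, P 1) ∈
          {x : Bool × Bool × Bool | x.1 = true → ¬ x.2.1 = true}}) ∩
        {P : G → Bool | (P 1, P 1, P 1) ∈
          {x : Bool × Bool × Bool | ¬ x.1 = true}} ∩
        (⋂ a : G, ⋂ b : G, {P : G → Bool | (P a, P b, P (a * b)) ∈
          {x : Bool × Bool × Bool | x.1 = true → x.2.1 = true → x.2.2 = true}}) ∩
        (⋂ g : G, ⋂ a : G, {P : G → Bool | (P a, P (g * a * g⁻¹), P 1) ∈
          {x : Bool × Bool × Bool | x.1 = true → x.2.1 = true}}) := by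
      ext P
      simp only [SpaceOfOrders, IsPositiveCone, Set.mem_setOf_eq, Set.mem_inter_iff,
        Set.mem_iInter]
      tauto
    rw [heq]
    exact ((((isClosed_iInter fun g => aux3 _ _ _ _).inter
      (isClosed_iInter fun g => aux3 _ _ _ _)).inter (aux3 _ _ _ _)).inter
      (isClosed_iInter fun a => isClosed_iInter fun b => aux3 _ _ _ _)).inter
      (isClosed_iInter fun g => isClosed_iInter fun a => aux3 _ _ _ _)
  exact ⟨hc, hc.isCompact⟩
end

section
/- Let p be a prime number. The family of real numbers (p^x), where x ranges over the dyadic rationals in the interval [0, 1) and p^x denotes the positive real power, is linearly independent over ℚ when ℝ is regarded as a ℚ-vector space. -/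
open Polynomial in
/-- Eisenstein: `X^n - p` is irreducible over `ℚ` for a prime `p` and `n > 0`. -/
lemma irreducible_X_pow_sub_C_prime (p : ℕ) (hp : p.Prime) (n : ℕ) (hn : 0 < n) :
    Irreducible ((X : ℚ[X]) ^ n - C (p : ℚ)) := by
  have hmonic : ((X : ℤ[X]) ^ n - C (p : ℤ)).Monic := monic_X_pow_sub_C _ hn.ne'
  have hprim : ((X : ℤ[X]) ^ n - C (p : ℤ)).IsPrimitive := hmonic.isPrimitive
  have hdeg : ((X : ℤ[X]) ^ n - C (p : ℤ)).natDegree = n := natDegree_X_pow_sub_C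
  have heis : ((X : ℤ[X]) ^ n - C (p : ℤ)).IsEisensteinAt (Ideal.span {(p : ℤ)}) := by
    constructor
    · rw [hmonic.leadingCoeff]
      intro h
      rw [Ideal.mem_span_singleton] at h
      have h1 := Int.le_of_dvd one_pos h
      have h2 : (2 : ℤ) ≤ (p : ℤ) := by exact_mod_cast hp.two_le
      omega
    · intro i hi
      rw [hdeg] at hi
      rw [coeff_sub, coeff_X_pow, coeff_C]
      rcases eq_or_ne i 0 with rfl | h0
      · simp only [if_neg hn.ne, zero_sub]
        exact neg_mem (Ideal.mem_span_singleton_self _)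
      · rw [if_neg hi.ne, if_neg h0, sub_zero]
        exact Ideal.zero_mem _
    · rw [coeff_sub, coeff_X_pow, coeff_C, if_neg hn.ne, if_pos rfl, zero_sub,
        Ideal.span_singleton_pow, Ideal.mem_span_singleton]
      intro h
      rw [dvd_neg] at h
      have h1 := Int.le_of_dvd (by exact_mod_cast hp.pos) h
      have h2 : (2 : ℤ) ≤ (p : ℤ) := by exact_mod_cast hp.two_le
      nlinarith
  have hirr : Irreducible ((X : ℤ[X]) ^ n - C (p : ℤ)) :=
    heis.irreducible (Ideal.span_singleton_prime (by exact_mod_cast hp.ne_zero) |>.mpr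
      (Nat.prime_iff_prime_int.mp hp)) hprim (by rw [hdeg]; exact hn)
  have := (Polynomial.IsPrimitive.Int.irreducible_iff_irreducible_map_cast hprim).mp hirr
  rwa [Polynomial.map_sub, Polynomial.map_pow, Polynomial.map_X, Polynomial.map_C,
    map_natCast] at this

open Polynomial in
/-- The powers `α^i`, `i < 2^K`, of `α = p^(2^(-K))` are `ℚ`-linearly independent. -/
lemma li_pow_root (p : ℕ) (hp : p.Prime) (K : ℕ) :
    LinearIndependent ℚ
      (fun i : Fin (2 ^ K) => ((p : ℝ) ^ (((2 : ℝ) ^ K)⁻¹)) ^ (i : ℕ)) := by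
  set α : ℝ := (p : ℝ) ^ (((2 : ℝ) ^ K)⁻¹) with hα
  have hp0 : (0 : ℝ) ≤ (p : ℝ) := Nat.cast_nonneg p
  have h2K : ((2 : ℝ) ^ K) ≠ 0 := by positivity
  have hroot : α ^ (2 ^ K : ℕ) = (p : ℝ) := by
    rw [hα, ← Real.rpow_natCast _ (2 ^ K), ← Real.rpow_mul hp0]
    push_cast
    rw [inv_mul_cancel₀ h2K, Real.rpow_one]
  have hmin : minpoly ℚ α = (X : ℚ[X]) ^ (2 ^ K) - C (p : ℚ) := by
    refine (minpoly.eq_of_irreducible_of_monic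
      (irreducible_X_pow_sub_C_prime p hp (2 ^ K) (by positivity)) ?_
      (monic_X_pow_sub_C _ (by positivity))).symm
    simp [hroot]
  have := linearIndependent_pow (K := ℚ) α
  rw [hmin, natDegree_X_pow_sub_C] at this
  exact this

/-- For a prime `p`, the family of real numbers `p^x`, where `x` ranges over the dyadic
rationals in `[0, 1)`, is linearly independent over `ℚ` (viewing `ℝ` as a `ℚ`-vector
space).  Here `p^x` is the positive real power `Real.rpow`. -/
theorem linearIndependent_prime_rpow_dyadic (p : ℕ) (hp : p.Prime) :
    LinearIndependent ℚ
      (fun x : {x : ℝ // (∃ m k : ℤ, x = (m : ℝ) / 2 ^ k) ∧ 0 ≤ x ∧ x < 1} =>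
        (p : ℝ) ^ (x : ℝ)) := by
  rw [linearIndependent_iff_finset_linearIndependent]
  intro s
  have hp0 : (0 : ℝ) ≤ (p : ℝ) := Nat.cast_nonneg p
  choose m k hmk using fun x : ↥s => x.1.2.1
  set K : ℕ := Finset.univ.sup (fun x : ↥s => (k x).toNat) with hK
  have h2K : (0 : ℝ) < (2 : ℝ) ^ K := by positivity
  have hkK : ∀ x : ↥s, k x ≤ (K : ℤ) := fun x =>
    le_trans (Int.self_le_toNat _)
      (Int.ofNat_le.mpr (Finset.le_sup (f := fun x : ↥s => (k x).toNat) (Finset.mem_univ x)))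
  -- the integer numerator of x with denominator 2^K
  set n : ↥s → ℤ := fun x => m x * 2 ^ ((K : ℤ) - k x).toNat with hn
  have key : ∀ x : ↥s, (x.1.1 : ℝ) * 2 ^ K = (n x : ℝ) := by
    intro x
    have hx : (x.1.1 : ℝ) = (m x : ℝ) / 2 ^ (k x) := hmk x
    have h2 : (2 : ℝ) ≠ 0 := two_ne_zero
    rw [hx, hn]
    push_cast
    rw [div_mul_eq_mul_div, div_eq_iff (by positivity : (2:ℝ) ^ (k x) ≠ 0)]
    rw [mul_assoc, ← zpow_natCast (2 : ℝ) ((((K : ℤ) - k x).toNat)),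
      Int.toNat_of_nonneg (by linarith [hkK x]), ← zpow_add₀ h2, sub_add_cancel,
      zpow_natCast]
  have hbound : ∀ x : ↥s, 0 ≤ n x ∧ n x < 2 ^ K := by
    intro x
    have h1 : (0 : ℝ) ≤ x.1.1 := x.1.2.2.1
    have h2 : (x.1.1 : ℝ) < 1 := x.1.2.2.2
    constructor
    · have : (0 : ℝ) ≤ (n x : ℝ) := by rw [← key x]; positivity
      exact_mod_cast this
    · have : (n x : ℝ) < 2 ^ K := by
        rw [← key x]
        calc (x.1.1 : ℝ) * 2 ^ K < 1 * 2 ^ K := by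
              exact mul_lt_mul_of_pos_right h2 h2K
          _ = 2 ^ K := one_mul _
      exact_mod_cast this
  set f : ↥s → Fin (2 ^ K) := fun x => ⟨(n x).toNat, by
    have h1 := (hbound x).1
    have h2 := (hbound x).2
    have hc : ((2 : ℤ) ^ K) = ((2 ^ K : ℕ) : ℤ) := by push_cast; ring
    rw [hc] at h2
    omega⟩ with hf
  have hfinj : Function.Injective f := by
    intro x y hxy
    have h1 : n x = n y := by
      have hx := (hbound x).1; have hy := (hbound y).1
      have : (n x).toNat = (n y).toNat := congrArg Fin.val hxy
      omega
    have : (x.1.1 : ℝ) * 2 ^ K = (y.1.1 : ℝ) * 2 ^ K := by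
      rw [key x, key y, h1]
    have hxy' : (x.1.1 : ℝ) = (y.1.1 : ℝ) := by
      field_simp at this
      exact this
    exact Subtype.ext (Subtype.ext hxy')
  have hfun : (fun x : ↥s => (p : ℝ) ^ (x.1.1 : ℝ)) =
      (fun i : Fin (2 ^ K) => ((p : ℝ) ^ (((2 : ℝ) ^ K)⁻¹)) ^ (i : ℕ)) ∘ f := by
    funext x
    have hx : (x.1.1 : ℝ) = ((n x).toNat : ℝ) / 2 ^ K := by
      rw [eq_div_iff h2K.ne', key x]
      exact_mod_cast (Int.toNat_of_nonneg (hbound x).1).symm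
    simp only [Function.comp_apply, hf]
    rw [← Real.rpow_natCast ((p : ℝ) ^ (((2 : ℝ) ^ K)⁻¹)) _, ← Real.rpow_mul hp0, hx]
    congr 1
    field_simp
  show LinearIndependent ℚ (fun x : ↥s => (p : ℝ) ^ (x.1.1 : ℝ))
  rw [hfun]
  exact (li_pow_root p hp K).comp f hfinj
end
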